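/- Let s ≥ 0 and ε > 0. For f ∈ H^{max(s+1, 3/2+ε)}(𝕋) and g ∈ H^{s+1}(𝕋), the commutator satisfies ‖⟨∂x⟩^s(f ∂x g) − f ⟨∂x⟩^s ∂x g‖_{L²} ≤ C ( ‖f‖_{H^{3/2+ε}} ‖g‖_{H^s} + ‖f‖_{H^{s+1}} ‖g‖_{H^{1/2+ε}} ). -/

import Mathlib

noncomputable section

/-- Japanese bracket of an integer: ⟨m⟩ = √(1 + m²). -/
def jb (m : ℤ) : ℝ := Real.sqrt (1 + (m : ℝ) ^ 2)

/-- Sobolev H^s norm of a sequence of Fourier coefficients. -/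
def hsNorm (s : ℝ) (a : ℤ → ℂ) : ℝ := Real.sqrt (∑' k : ℤ, jb k ^ (2 * s) * ‖a k‖ ^ 2)

/-- Fourier coefficients of the commutator ⟨∂x⟩^s(f ∂x g) − f ⟨∂x⟩^s ∂x g:
its n-th coefficient is Σ_k (⟨n⟩^s − ⟨k⟩^s) (ik) f̂(n−k) ĝ(k). -/
def commCoeff (s : ℝ) (f g : ℤ → ℂ) : ℤ → ℂ := fun n =>
  ∑' k : ℤ, ((jb n ^ s - jb k ^ s : ℝ) : ℂ) * (Complex.I * (k : ℂ)) * f (n - k) * g k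

open ENNReal

lemma jb_pos (m : ℤ) : 0 < jb m := Real.sqrt_pos.2 (by positivity)

lemma jb_sq (m : ℤ) : jb m ^ 2 = 1 + (m:ℝ)^2 := Real.sq_sqrt (by positivity)

lemma one_le_jb (m : ℤ) : 1 ≤ jb m := by
  have h := Real.sqrt_le_sqrt (show (1:ℝ) ≤ 1 + (m:ℝ)^2 by nlinarith [sq_nonneg ((m:ℝ))])
  rwa [Real.sqrt_one] at h

lemma abs_le_jb (m : ℤ) : |(m:ℝ)| ≤ jb m := by
  rw [jb, ← Real.sqrt_sq_eq_abs]
  exact Real.sqrt_le_sqrt (by nlinarith)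

lemma jb_zero : jb 0 = 1 := by simp [jb]

lemma jb_add_le (a b : ℤ) : jb (a + b) ≤ jb a + jb b := by
  have ha := jb_sq a
  have hb := jb_sq b
  have hpa := jb_pos a
  have hpb := jb_pos b
  have h1 : 1 + (a:ℝ)*(b:ℝ) ≤ jb a * jb b := by
    have hsq : (1 + (a:ℝ)*b)^2 ≤ (jb a * jb b)^2 := by
      rw [mul_pow, ha, hb]; nlinarith [sq_nonneg ((a:ℝ) - b)]
    have h0 : (0:ℝ) < jb a * jb b := mul_pos hpa hpb
    nlinarith [hsq, h0]
  have h2 : (0:ℝ) ≤ jb a + jb b := by linarith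
  have h3 : jb (a+b) ^ 2 ≤ (jb a + jb b)^2 := by
    rw [jb_sq]
    push_cast
    nlinarith
  nlinarith [jb_pos (a+b)]

lemma abs_jb_sub_jb (n k : ℤ) : |jb n - jb k| ≤ |(n:ℝ) - (k:ℝ)| := by
  have key : ∀ a b : ℤ, jb a - jb b ≤ |(a:ℝ) - b| := by
    intro a b
    have hpa := jb_pos a
    have hpb := jb_pos b
    have h1 : jb a ^ 2 - jb b ^ 2 = ((a:ℝ)-b) * ((a:ℝ)+b) := by
      rw [jb_sq, jb_sq]; ring
    have h3 : ((a:ℝ)-b) * ((a:ℝ)+b) ≤ |(a:ℝ)-b| * (jb a + jb b) := by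
      calc ((a:ℝ)-b) * ((a:ℝ)+b) ≤ |(a:ℝ)-b| * |(a:ℝ)+b| := by
            rw [← abs_mul]; exact le_abs_self _
        _ ≤ |(a:ℝ)-b| * (jb a + jb b) := by
            apply mul_le_mul_of_nonneg_left _ (abs_nonneg _)
            calc |(a:ℝ)+b| ≤ |(a:ℝ)| + |(b:ℝ)| := abs_add_le _ _
              _ ≤ jb a + jb b := add_le_add (abs_le_jb a) (abs_le_jb b)
    nlinarith
  rw [abs_sub_le_iff]
  exact ⟨key n k, by rw [show |(n:ℝ) - k| = |(k:ℝ) - n| by rw [abs_sub_comm]]; exact key k n⟩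

open Real in
-- MVT-type bound for rpow
lemma rpow_sub_rpow_le {s a b : ℝ} (hs : 0 ≤ s) (ha : 0 < a) (hab : a ≤ b) :
    b ^ s - a ^ s ≤ s * (a ^ (s-1) + b ^ (s-1)) * (b - a) := by
  rcases eq_or_lt_of_le hab with rfl | hlt
  · simp
  have hb : 0 < b := lt_trans ha hlt
  have hcont : ContinuousOn (fun x : ℝ => x ^ s) (Set.Icc a b) := by
    intro x hx
    have hx0 : x ≠ 0 := ne_of_gt (lt_of_lt_of_le ha hx.1)
    exact ((Real.hasDerivAt_rpow_const (Or.inl hx0)).continuousAt).continuousWithinAt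
  have hderiv : ∀ x ∈ Set.Ioo a b, HasDerivAt (fun x : ℝ => x ^ s) (s * x ^ (s-1)) x :=
    fun x hx => Real.hasDerivAt_rpow_const (Or.inl (ne_of_gt (lt_trans ha hx.1)))
  obtain ⟨c, hc, hceq⟩ := exists_hasDerivAt_eq_slope (fun x : ℝ => x ^ s)
    (fun x => s * x ^ (s-1)) hlt hcont hderiv
  have hc0 : 0 < c := lt_trans ha hc.1
  have hkey : b ^ s - a ^ s = s * c ^ (s-1) * (b - a) := by
    have hba : b - a ≠ 0 := ne_of_gt (by linarith)
    rw [eq_div_iff hba] at hceq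
    linarith [hceq]
  rw [hkey]
  have hcb : c ^ (s-1) ≤ a ^ (s-1) + b ^ (s-1) := by
    rcases le_or_gt 1 s with h1 | h1
    · calc c ^ (s-1) ≤ b ^ (s-1) := Real.rpow_le_rpow hc0.le hc.2.le (by linarith)
        _ ≤ a ^ (s-1) + b ^ (s-1) := le_add_of_nonneg_left (Real.rpow_nonneg ha.le _)
    · calc c ^ (s-1) ≤ a ^ (s-1) := Real.rpow_le_rpow_of_nonpos ha hc.1.le (by linarith)
        _ ≤ a ^ (s-1) + b ^ (s-1) := le_add_of_nonneg_right (Real.rpow_nonneg hb.le _)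
  have : s * c ^ (s-1) ≤ s * (a ^ (s-1) + b ^ (s-1)) := mul_le_mul_of_nonneg_left hcb hs
  exact mul_le_mul_of_nonneg_right this (by linarith)

-- if B/2 ≤ x ≤ 2B, then x^(s-1) ≤ 2^(s+1) B^(s-1)
lemma middle_rpow_le {s B x : ℝ} (hs : 0 ≤ s) (hB : 0 < B) (h1 : B/2 ≤ x) (h2 : x ≤ 2*B) :
    x ^ (s-1) ≤ 2 ^ (s+1) * B ^ (s-1) := by
  have hx : 0 < x := lt_of_lt_of_le (by linarith) h1
  rcases le_or_gt 1 s with h | h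
  · calc x ^ (s-1) ≤ (2*B) ^ (s-1) := Real.rpow_le_rpow hx.le h2 (by linarith)
      _ = 2 ^ (s-1) * B ^ (s-1) := Real.mul_rpow (by norm_num) hB.le
      _ ≤ 2 ^ (s+1) * B ^ (s-1) := by
          apply mul_le_mul_of_nonneg_right _ (Real.rpow_nonneg hB.le _)
          exact Real.rpow_le_rpow_of_exponent_le (by norm_num) (by linarith)
  · calc x ^ (s-1) ≤ (B/2) ^ (s-1) :=
          Real.rpow_le_rpow_of_nonpos (by linarith) h1 (by linarith)
      _ = B ^ (s-1) * (2:ℝ) ^ (1-s) := by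
          rw [Real.div_rpow hB.le (by norm_num), div_eq_mul_inv,
            ← Real.rpow_neg (by norm_num : (0:ℝ) ≤ 2), show -(s-1) = 1-s by ring]
      _ ≤ B ^ (s-1) * 2 ^ (s+1) := by
          apply mul_le_mul_of_nonneg_left _ (Real.rpow_nonneg hB.le _)
          exact Real.rpow_le_rpow_of_exponent_le (by norm_num) (by linarith)
      _ = 2 ^ (s+1) * B ^ (s-1) := by ring

-- Case 1 estimate: 2|n-k| < |k|
lemma kernel_case1 {s : ℝ} (hs : 0 ≤ s) {n k : ℤ} (h : 2 * |(n:ℝ) - k| < |(k:ℝ)|) :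
    |jb n ^ s - jb k ^ s| * |(k:ℝ)| ≤ s * 2 ^ (s+2) * (jb (n-k) * jb k ^ s) := by
  set A := jb n with hA
  set B := jb k with hB
  have hpA := jb_pos n
  have hpB := jb_pos k
  have hsqA := jb_sq n
  have hsqB := jb_sq k
  -- B/2 ≤ A and A ≤ 2B
  have hnk : |(n:ℝ)| ≥ |(k:ℝ)| - |(n:ℝ) - k| := by
    have := abs_sub_abs_le_abs_sub (k:ℝ) (n:ℝ)
    rw [abs_sub_comm] at this
    linarith
  have hnk2 : |(n:ℝ)| ≤ |(k:ℝ)| + |(n:ℝ) - k| := by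
    have := abs_sub_abs_le_abs_sub (n:ℝ) (k:ℝ)
    linarith
  have habs : |(n:ℝ)| > |(k:ℝ)|/2 := by linarith
  have habs2 : |(n:ℝ)| < 3/2 * |(k:ℝ)| := by linarith
  have hA1 : B/2 ≤ A := by
    nlinarith [sq_abs ((n:ℝ)), sq_abs ((k:ℝ)), abs_nonneg ((n:ℝ)), abs_nonneg ((k:ℝ))]
  have hA2 : A ≤ 2*B := by
    nlinarith [sq_abs ((n:ℝ)), sq_abs ((k:ℝ)), abs_nonneg ((n:ℝ)), abs_nonneg ((k:ℝ))]
  have hABle : |A - B| ≤ jb (n-k) := by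
    calc |A - B| ≤ |(n:ℝ) - k| := abs_jb_sub_jb n k
      _ ≤ jb (n - k) := by
          have := abs_le_jb (n-k)
          rwa [show (((n-k) : ℤ) : ℝ) = (n:ℝ) - k by push_cast; ring] at this
  have hmid1 : A ^ (s-1) ≤ 2 ^ (s+1) * B ^ (s-1) := middle_rpow_le hs hpB hA1 hA2
  have hmid2 : B ^ (s-1) ≤ 2 ^ (s+1) * B ^ (s-1) := by
    apply middle_rpow_le hs hpB <;> linarith
  -- main bound on the power difference
  have hdiff : |A ^ s - B ^ s| ≤ s * 2 ^ (s+2) * (B ^ (s-1) * jb (n-k)) := by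
    have key : ∀ x y : ℝ, 0 < x → 0 < y → x ≤ y →
        x ^ (s-1) ≤ 2 ^ (s+1) * B ^ (s-1) → y ^ (s-1) ≤ 2 ^ (s+1) * B ^ (s-1) →
        |x - y| ≤ jb (n-k) →
        y ^ s - x ^ s ≤ s * 2 ^ (s+2) * (B ^ (s-1) * jb (n-k)) := by
      intro x y hx hy hxy hxm hym hd
      have h1 := rpow_sub_rpow_le hs hx hxy
      have h2 : x ^ (s-1) + y ^ (s-1) ≤ 2 ^ (s+2) * B ^ (s-1) := by
        have : (2:ℝ) ^ (s+2) = 2 ^ (s+1) + 2 ^ (s+1) := by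
          rw [show s+2 = (s+1)+1 by ring, Real.rpow_add_one (by norm_num)]
          ring
        rw [this]; linarith
      have h3 : y - x ≤ jb (n-k) := by
        have : y - x ≤ |x - y| := by rw [abs_sub_comm]; exact le_abs_self _
        linarith
      calc y ^ s - x ^ s ≤ s * (x ^ (s-1) + y ^ (s-1)) * (y - x) := h1
        _ ≤ s * (2 ^ (s+2) * B ^ (s-1)) * jb (n-k) := by
            apply mul_le_mul
            · exact mul_le_mul_of_nonneg_left h2 hs
            · exact h3
            · linarith
            · positivity
        _ = s * 2 ^ (s+2) * (B ^ (s-1) * jb (n-k)) := by ring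
    rcases le_total A B with hab | hab
    · rw [abs_of_nonpos (by
        have := Real.rpow_le_rpow hpA.le hab hs
        linarith)]
      have := key A B hpA hpB hab hmid1 hmid2 hABle
      linarith
    · rw [abs_of_nonneg (by
        have := Real.rpow_le_rpow hpB.le hab hs
        linarith)]
      have hBA : |B - A| ≤ jb (n-k) := by rwa [abs_sub_comm]
      exact key B A hpB hpA hab hmid2 hmid1 hBA
  have hkB : |(k:ℝ)| ≤ B := abs_le_jb k
  have hBs : B ^ (s-1) * B = B ^ s := by
    rw [← Real.rpow_add_one (ne_of_gt hpB), show s-1+1 = s by ring]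
  calc |A ^ s - B ^ s| * |(k:ℝ)|
      ≤ (s * 2 ^ (s+2) * (B ^ (s-1) * jb (n-k))) * B :=
        mul_le_mul hdiff hkB (abs_nonneg _)
          (mul_nonneg (mul_nonneg hs (Real.rpow_nonneg (by norm_num) _))
            (mul_nonneg (Real.rpow_nonneg hpB.le _) (jb_pos _).le))
    _ = s * 2 ^ (s+2) * ((B ^ (s-1) * B) * jb (n-k)) := by ring
    _ = s * 2 ^ (s+2) * (jb (n-k) * B ^ s) := by rw [hBs]; ring

-- Case 2 facts: |k| ≤ 2|n−k|
lemma case2_facts {n k : ℤ} (h : |(k:ℝ)| ≤ 2 * |(n:ℝ) - k|) :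
    jb k ≤ 2 * jb (n-k) ∧ jb n ≤ 3 * jb (n-k) := by
  have hpk := jb_pos k
  have hpd := jb_pos (n-k)
  have hsqk := jb_sq k
  have hsqd := jb_sq (n-k)
  have hcast : (((n-k) : ℤ) : ℝ) = (n:ℝ) - k := by push_cast; ring
  rw [hcast] at hsqd
  have h1 : jb k ≤ 2 * jb (n-k) := by
    nlinarith [sq_abs ((k:ℝ)), sq_abs ((n:ℝ) - k), abs_nonneg ((k:ℝ)), abs_nonneg ((n:ℝ)-k)]
  refine ⟨h1, ?_⟩
  have h2 : jb n ≤ jb (n-k) + jb k := by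
    have := jb_add_le (n-k) k
    rwa [show n - k + k = n by ring] at this
  linarith

-- generic case-2 estimate: for 0 ≤ β ≤ 1,
-- |⟨n⟩^s - ⟨k⟩^s| * |k| ≤ 2(3^s+2^s) ⟨n-k⟩^(s+1-β) ⟨k⟩^β
lemma kernel_case2 {s β : ℝ} (hs : 0 ≤ s) (hβ0 : 0 ≤ β) (hβ1 : β ≤ 1)
    {n k : ℤ} (h : |(k:ℝ)| ≤ 2 * |(n:ℝ) - k|) :
    |jb n ^ s - jb k ^ s| * |(k:ℝ)| ≤
      2 * (3 ^ s + 2 ^ s) * (jb (n-k) ^ (s + 1 - β) * jb k ^ β) := by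
  obtain ⟨hk2, hn3⟩ := case2_facts h
  set B := jb k
  set D := jb (n-k)
  have hpB := jb_pos k
  have hpD := jb_pos (n-k)
  have h1 : |jb n ^ s - B ^ s| ≤ (3 ^ s + 2 ^ s) * D ^ s := by
    have hn : jb n ^ s ≤ 3 ^ s * D ^ s := by
      rw [← Real.mul_rpow (by norm_num) hpD.le]
      exact Real.rpow_le_rpow (jb_pos n).le hn3 hs
    have hk : B ^ s ≤ 2 ^ s * D ^ s := by
      rw [← Real.mul_rpow (by norm_num) hpD.le]
      exact Real.rpow_le_rpow hpB.le hk2 hs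
    have hnn : 0 ≤ jb n ^ s := Real.rpow_nonneg (jb_pos n).le s
    have hbn : 0 ≤ B ^ s := Real.rpow_nonneg hpB.le s
    rw [abs_sub_le_iff]
    constructor <;> nlinarith [Real.rpow_nonneg hpD.le s]
  have h2 : |(k:ℝ)| ≤ 2 * D ^ (1 - β) * B ^ β := by
    have hsplit : B = B ^ (1-β) * B ^ β := by
      rw [← Real.rpow_add hpB, show 1 - β + β = 1 by ring, Real.rpow_one]
    have hB1 : B ^ (1-β) ≤ (2*D) ^ (1-β) := Real.rpow_le_rpow hpB.le hk2 (by linarith)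
    have hB2 : (2*D) ^ (1-β) = 2 ^ (1-β) * D ^ (1-β) := Real.mul_rpow (by norm_num) hpD.le
    have hB3 : (2:ℝ) ^ (1-β) ≤ 2 := by
      calc (2:ℝ) ^ (1-β) ≤ 2 ^ (1:ℝ) := Real.rpow_le_rpow_of_exponent_le (by norm_num) (by linarith)
        _ = 2 := Real.rpow_one 2
    calc |(k:ℝ)| ≤ B := abs_le_jb k
      _ = B ^ (1-β) * B ^ β := hsplit
      _ ≤ (2 ^ (1-β) * D ^ (1-β)) * B ^ β := by
          rw [← hB2]
          exact mul_le_mul_of_nonneg_right hB1 (Real.rpow_nonneg hpB.le β)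
      _ ≤ (2 * D ^ (1-β)) * B ^ β := by
          apply mul_le_mul_of_nonneg_right _ (Real.rpow_nonneg hpB.le β)
          exact mul_le_mul_of_nonneg_right hB3 (Real.rpow_nonneg hpD.le _)
      _ = 2 * D ^ (1-β) * B ^ β := by ring
  have hDs : D ^ s * D ^ (1-β) = D ^ (s + 1 - β) := by
    rw [← Real.rpow_add hpD, show s + (1-β) = s + 1 - β by ring]
  calc |jb n ^ s - B ^ s| * |(k:ℝ)|
      ≤ ((3 ^ s + 2 ^ s) * D ^ s) * (2 * D ^ (1-β) * B ^ β) := by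
        apply mul_le_mul h1 h2 (abs_nonneg _)
        have : (0:ℝ) < 3 ^ s := Real.rpow_pos_of_pos (by norm_num) s
        have : (0:ℝ) < 2 ^ s := Real.rpow_pos_of_pos (by norm_num) s
        have := Real.rpow_nonneg hpD.le s
        positivity
    _ = 2 * (3 ^ s + 2 ^ s) * ((D ^ s * D ^ (1-β)) * B ^ β) := by ring
    _ = 2 * (3 ^ s + 2 ^ s) * (D ^ (s + 1 - β) * B ^ β) := by rw [hDs]

-- xy ≤ x² + y² in ℝ≥0∞
lemma ennreal_mul_le_sq_add_sq (x y : ℝ≥0∞) : x * y ≤ x^2 + y^2 := by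
  rcases le_total x y with h | h
  · calc x * y ≤ y * y := mul_le_mul_left h y
      _ = y^2 := (sq y).symm
      _ ≤ x^2 + y^2 := le_add_self
  · calc x * y ≤ x * x := mul_le_mul_right h x
      _ = x^2 := (sq x).symm
      _ ≤ x^2 + y^2 := le_self_add

-- Cauchy-Schwarz (with constant 2): (Σ a b)² ≤ 2 (Σ a²)(Σ b²)
lemma ennreal_cs (a b : ℤ → ℝ≥0∞) :
    (∑' k, a k * b k)^2 ≤ 2 * (∑' k, (a k)^2) * (∑' k, (b k)^2) := by
  have expand : (∑' k, a k * b k)^2 = ∑' k, ∑' j, (a k * b k) * (a j * b j) := by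
    rw [sq, ← ENNReal.tsum_mul_right]
    congr 1; ext k
    rw [← ENNReal.tsum_mul_left]
  rw [expand]
  have hle : ∀ k j : ℤ, (a k * b k) * (a j * b j) ≤ (a k)^2 * (b j)^2 + (a j)^2 * (b k)^2 := by
    intro k j
    calc (a k * b k) * (a j * b j) = (a k * b j) * (a j * b k) := by ring
      _ ≤ (a k * b j)^2 + (a j * b k)^2 := ennreal_mul_le_sq_add_sq _ _
      _ = (a k)^2 * (b j)^2 + (a j)^2 * (b k)^2 := by ring
  calc ∑' k, ∑' j, (a k * b k) * (a j * b j)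
      ≤ ∑' k, ∑' j, ((a k)^2 * (b j)^2 + (a j)^2 * (b k)^2) :=
        ENNReal.tsum_le_tsum fun k => ENNReal.tsum_le_tsum fun j => hle k j
    _ = ∑' k, ((∑' j, (a k)^2 * (b j)^2) + (∑' j, (a j)^2 * (b k)^2)) :=
        tsum_congr fun k => ENNReal.tsum_add
    _ = ∑' k, (((a k)^2 * ∑' j, (b j)^2) + ((∑' j, (a j)^2) * (b k)^2)) :=
        tsum_congr fun k => by rw [ENNReal.tsum_mul_left, ENNReal.tsum_mul_right]
    _ = (∑' k, (a k)^2) * (∑' j, (b j)^2) + (∑' j, (a j)^2) * (∑' k, (b k)^2) := by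
        rw [ENNReal.tsum_add, ENNReal.tsum_mul_right, ENNReal.tsum_mul_left]
    _ = 2 * (∑' k, (a k)^2) * (∑' k, (b k)^2) := by ring
  
-- translation invariance
lemma tsum_translate (A : ℤ → ℝ≥0∞) (n : ℤ) : ∑' k, A (n - k) = ∑' k, A k :=
  (Equiv.subLeft n).tsum_eq A

lemma tsum_translate' (A : ℤ → ℝ≥0∞) (k : ℤ) : ∑' n, A (n - k) = ∑' n, A n :=
  (Equiv.subRight k).tsum_eq A

-- Young: Σ_n (Σ_k A(n−k) B k)² ≤ 2 (Σ A)² (Σ B²)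
lemma ennreal_young (A B : ℤ → ℝ≥0∞) :
    ∑' n, (∑' k, A (n-k) * B k)^2 ≤ 2 * (∑' k, A k)^2 * (∑' k, (B k)^2) := by
  have step1 : ∀ n : ℤ, (∑' k, A (n-k) * B k)^2 ≤
      2 * (∑' k, A k) * ∑' k, A (n-k) * (B k)^2 := by
    intro n
    have expand : (∑' k, A (n-k) * B k)^2 = ∑' k, ∑' j, (A (n-k) * B k) * (A (n-j) * B j) := by
      rw [sq, ← ENNReal.tsum_mul_right]
      exact tsum_congr fun k => by rw [← ENNReal.tsum_mul_left]
    rw [expand]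
    have hle : ∀ k j : ℤ, (A (n-k) * B k) * (A (n-j) * B j) ≤
        A (n-k) * A (n-j) * ((B k)^2 + (B j)^2) := by
      intro k j
      calc (A (n-k) * B k) * (A (n-j) * B j) = (A (n-k) * A (n-j)) * (B k * B j) := by ring
        _ ≤ (A (n-k) * A (n-j)) * ((B k)^2 + (B j)^2) :=
            mul_le_mul_right (ennreal_mul_le_sq_add_sq _ _) _
    calc ∑' k, ∑' j, (A (n-k) * B k) * (A (n-j) * B j)
        ≤ ∑' k, ∑' j, A (n-k) * A (n-j) * ((B k)^2 + (B j)^2) :=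
          ENNReal.tsum_le_tsum fun k => ENNReal.tsum_le_tsum fun j => hle k j
      _ = ∑' k, ∑' j, (A (n-k) * A (n-j) * (B k)^2 + A (n-k) * A (n-j) * (B j)^2) :=
          tsum_congr fun k => tsum_congr fun j => by ring
      _ = ∑' k, ((∑' j, A (n-k) * A (n-j) * (B k)^2) + ∑' j, A (n-k) * A (n-j) * (B j)^2) :=
          tsum_congr fun k => ENNReal.tsum_add
      _ = ∑' k, (A (n-k) * (B k)^2 * (∑' j, A (n-j)) + A (n-k) * ∑' j, A (n-j) * (B j)^2) := by
          refine tsum_congr fun k => ?_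
          congr 1
          · rw [← ENNReal.tsum_mul_left]
            exact tsum_congr fun j => by ring
          · rw [← ENNReal.tsum_mul_left]
            exact tsum_congr fun j => by ring
      _ = (∑' k, A (n-k) * (B k)^2 * (∑' j, A (n-j))) + ∑' k, A (n-k) * ∑' j, A (n-j) * (B j)^2 := by
          rw [ENNReal.tsum_add]
      _ = 2 * (∑' k, A k) * ∑' k, A (n-k) * (B k)^2 := by
          rw [ENNReal.tsum_mul_right, ENNReal.tsum_mul_right, tsum_translate A n]
          ring
  calc ∑' n, (∑' k, A (n-k) * B k)^2
      ≤ ∑' n, 2 * (∑' k, A k) * ∑' k, A (n-k) * (B k)^2 :=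
        ENNReal.tsum_le_tsum step1
    _ = 2 * (∑' k, A k) * ∑' n, ∑' k, A (n-k) * (B k)^2 := ENNReal.tsum_mul_left
    _ = 2 * (∑' k, A k) * ∑' k, ∑' n, A (n-k) * (B k)^2 := by rw [ENNReal.tsum_comm]
    _ = 2 * (∑' k, A k) * ∑' k, (B k)^2 * ∑' n, A (n-k) := by
        congr 1
        refine tsum_congr fun k => ?_
        rw [← ENNReal.tsum_mul_left]
        exact tsum_congr fun n => by ring
    _ = 2 * (∑' k, A k) * ((∑' k, A k) * ∑' k, (B k)^2) := by
        congr 1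
        have : ∀ k : ℤ, (∑' n, A (n-k)) = ∑' n, A n := fun k => tsum_translate' A k
        rw [show (fun k => (B k)^2 * ∑' n, A (n-k)) = fun k => (B k)^2 * ∑' n, A n by
          ext k; rw [this k]]
        rw [ENNReal.tsum_mul_right]
        ring
    _ = 2 * (∑' k, A k)^2 * (∑' k, (B k)^2) := by ring


lemma sqrt_add_le_sqrt_add_sqrt {x y : ℝ} (hx : 0 ≤ x) (hy : 0 ≤ y) :
    Real.sqrt (x+y) ≤ Real.sqrt x + Real.sqrt y := by
  rw [show x + y = Real.sqrt x ^2 + Real.sqrt y ^2 by rw [Real.sq_sqrt hx, Real.sq_sqrt hy]]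
  have h : Real.sqrt x ^2 + Real.sqrt y^2 ≤ (Real.sqrt x + Real.sqrt y)^2 := by
    nlinarith [Real.sqrt_nonneg x, Real.sqrt_nonneg y]
  calc Real.sqrt _ ≤ Real.sqrt ((Real.sqrt x + Real.sqrt y)^2) := Real.sqrt_le_sqrt h
    _ = _ := Real.sqrt_sq (by positivity)

lemma sigma_summable {σ : ℝ} (hσ : 0 < σ) : Summable (fun m : ℤ => jb m ^ (-(1+σ))) := by
  have h1 : Summable (fun m : ℤ => |(m:ℝ)| ^ (-(1+σ)) + if m = 0 then (1:ℝ) else 0) := by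
    apply Summable.add (Real.summable_abs_int_rpow (by linarith))
    apply summable_of_ne_finset_zero (s := ({0} : Finset ℤ))
    intro m hm
    simp only [Finset.mem_singleton] at hm
    simp [hm]
  apply Summable.of_nonneg_of_le (fun m => Real.rpow_nonneg (jb_pos m).le _) _ h1
  intro m
  by_cases hm : m = 0
  · subst hm
    rw [jb_zero, Real.one_rpow]
    simp [Real.zero_rpow (show -(1+σ) ≠ 0 by intro h; nlinarith)]
    exact Real.rpow_nonneg le_rfl _
  · have habs : (0:ℝ) < |(m:ℝ)| := by
      simp only [abs_pos, ne_eq, Int.cast_eq_zero]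
      exact hm
    simp only [hm, if_false, add_zero]
    exact Real.rpow_le_rpow_of_nonpos habs (abs_le_jb m) (by linarith)

lemma ofReal_norm_tsum_le (x : ℤ → ℂ) :
    ENNReal.ofReal ‖∑' k, x k‖ ≤ ∑' k, ENNReal.ofReal ‖x k‖ := by
  by_cases hx : Summable x
  · have hn : Summable fun k => ‖x k‖ := summable_norm_iff.2 hx
    calc ENNReal.ofReal ‖∑' k, x k‖ ≤ ENNReal.ofReal (∑' k, ‖x k‖) :=
          ENNReal.ofReal_le_ofReal (norm_tsum_le_tsum_norm hn)
      _ = ∑' k, ENNReal.ofReal ‖x k‖ :=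
          ENNReal.ofReal_tsum_of_nonneg (fun k => norm_nonneg _) hn
  · rw [tsum_eq_zero_of_not_summable hx]
    simp

lemma summable_of_ennreal_ne_top {h : ℤ → ℝ} (hnn : ∀ n, 0 ≤ h n)
    (hfin : (∑' n, ENNReal.ofReal (h n)) ≠ ⊤) : Summable h := by
  have h1 : ∀ n, ENNReal.ofReal (h n) = ((h n).toNNReal : ℝ≥0∞) := fun n => rfl
  simp_rw [h1] at hfin
  have h2 : Summable (fun n => (h n).toNNReal) := ENNReal.tsum_coe_ne_top_iff_summable.1 hfin
  have h3 : Summable (fun n => ((h n).toNNReal : ℝ)) := NNReal.summable_coe.2 h2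
  apply h3.congr
  intro n
  exact Real.coe_toNNReal _ (hnn n)

-- weight comparison in ennreal
lemma weight_mono {c d : ℝ} (hcd : c ≤ d) (x : ℝ) (m : ℤ) :
    ENNReal.ofReal (jb m ^ c * x^2) ≤ ENNReal.ofReal (jb m ^ d * x^2) := by
  apply ENNReal.ofReal_le_ofReal
  exact mul_le_mul_of_nonneg_right
    (Real.rpow_le_rpow_of_exponent_le (one_le_jb m) hcd) (sq_nonneg x)

lemma core (s σ a1 b1 a2 b2 t1 u1 t2 u2 C0 : ℝ)
    (hσ0 : 0 < σ) (hC0 : 0 ≤ C0)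
    (ht1 : 2*a1 + 1 + σ ≤ 2*t1) (ht2 : 2*a2 + 1 + σ ≤ 2*t2)
    (hu1 : 2*b1 ≤ 2*u1) (hu2 : 2*b2 ≤ 2*u2)
    (f g : ℤ → ℂ)
    (hf1 : Summable (fun m : ℤ => jb m ^ (2*t1) * ‖f m‖^2))
    (hf2 : Summable (fun m : ℤ => jb m ^ (2*t2) * ‖f m‖^2))
    (hg1 : Summable (fun m : ℤ => jb m ^ (2*u1) * ‖g m‖^2))
    (hg2 : Summable (fun m : ℤ => jb m ^ (2*u2) * ‖g m‖^2))
    (hK : ∀ n k : ℤ, |jb n ^ s - jb k ^ s| * |(k:ℝ)| ≤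
        C0 * (jb (n-k) ^ a1 * jb k ^ b1 + jb (n-k) ^ a2 * jb k ^ b2)) :
    Summable (fun n : ℤ => ‖commCoeff s f g n‖^2) ∧
    hsNorm 0 (commCoeff s f g) ≤
      (C0 * Real.sqrt (12 * ∑' m : ℤ, jb m ^ (-(1+σ)))) *
        (hsNorm t1 f * hsNorm u1 g + hsNorm t2 f * hsNorm u2 g) := by
  classical
  set c0 : ℝ≥0∞ := ENNReal.ofReal C0 with hc0
  set F1 : ℤ → ℝ≥0∞ := fun m => ENNReal.ofReal (jb m ^ a1 * ‖f m‖) with hF1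
  set F2 : ℤ → ℝ≥0∞ := fun m => ENNReal.ofReal (jb m ^ a2 * ‖f m‖) with hF2
  set G1 : ℤ → ℝ≥0∞ := fun m => ENNReal.ofReal (jb m ^ b1 * ‖g m‖) with hG1
  set G2 : ℤ → ℝ≥0∞ := fun m => ENNReal.ofReal (jb m ^ b2 * ‖g m‖) with hG2
  set Tf1 : ℝ≥0∞ := ∑' m, ENNReal.ofReal (jb m ^ (2*t1) * ‖f m‖^2) with hTf1
  set Tf2 : ℝ≥0∞ := ∑' m, ENNReal.ofReal (jb m ^ (2*t2) * ‖f m‖^2) with hTf2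
  set Tg1 : ℝ≥0∞ := ∑' m, ENNReal.ofReal (jb m ^ (2*u1) * ‖g m‖^2) with hTg1
  set Tg2 : ℝ≥0∞ := ∑' m, ENNReal.ofReal (jb m ^ (2*u2) * ‖g m‖^2) with hTg2
  set Sσ : ℝ≥0∞ := ∑' m, ENNReal.ofReal (jb m ^ (-(1+σ))) with hSσ
  have hsig := sigma_summable hσ0
  -- finiteness of the building blocks
  have hSσfin : Sσ ≠ ⊤ := by
    rw [hSσ, ← ENNReal.ofReal_tsum_of_nonneg (fun m => Real.rpow_nonneg (jb_pos m).le _) hsig]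
    exact ENNReal.ofReal_ne_top
  have hTf1fin : Tf1 ≠ ⊤ := by
    rw [hTf1, ← ENNReal.ofReal_tsum_of_nonneg (fun m => mul_nonneg (Real.rpow_nonneg (jb_pos m).le _) (sq_nonneg _)) hf1]
    exact ENNReal.ofReal_ne_top
  have hTf2fin : Tf2 ≠ ⊤ := by
    rw [hTf2, ← ENNReal.ofReal_tsum_of_nonneg (fun m => mul_nonneg (Real.rpow_nonneg (jb_pos m).le _) (sq_nonneg _)) hf2]
    exact ENNReal.ofReal_ne_top
  have hTg1fin : Tg1 ≠ ⊤ := by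
    rw [hTg1, ← ENNReal.ofReal_tsum_of_nonneg (fun m => mul_nonneg (Real.rpow_nonneg (jb_pos m).le _) (sq_nonneg _)) hg1]
    exact ENNReal.ofReal_ne_top
  have hTg2fin : Tg2 ≠ ⊤ := by
    rw [hTg2, ← ENNReal.ofReal_tsum_of_nonneg (fun m => mul_nonneg (Real.rpow_nonneg (jb_pos m).le _) (sq_nonneg _)) hg2]
    exact ENNReal.ofReal_ne_top
  -- Step A : pointwise bound on the commutator coefficient
  have stepA : ∀ n : ℤ, ENNReal.ofReal ‖commCoeff s f g n‖ ≤
      c0 * ((∑' k, F1 (n-k) * G1 k) + (∑' k, F2 (n-k) * G2 k)) := by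
    intro n
    have h1 : ENNReal.ofReal ‖commCoeff s f g n‖ ≤
        ∑' k, ENNReal.ofReal ‖((jb n ^ s - jb k ^ s : ℝ) : ℂ) *
          (Complex.I * (k : ℂ)) * f (n - k) * g k‖ := ofReal_norm_tsum_le _
    have h2 : ∀ k : ℤ, ENNReal.ofReal ‖((jb n ^ s - jb k ^ s : ℝ) : ℂ) *
        (Complex.I * (k : ℂ)) * f (n - k) * g k‖ ≤
        c0 * (F1 (n-k) * G1 k + F2 (n-k) * G2 k) := by
      intro k
      have hnorm : ‖((jb n ^ s - jb k ^ s : ℝ) : ℂ) * (Complex.I * (k : ℂ)) * f (n - k) * g k‖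
          = |jb n ^ s - jb k ^ s| * |(k:ℝ)| * (‖f (n-k)‖ * ‖g k‖) := by
        simp [norm_mul, ← Complex.ofReal_sub, Complex.norm_real]
        ring
      rw [hnorm]
      have hle : |jb n ^ s - jb k ^ s| * |(k:ℝ)| * (‖f (n-k)‖ * ‖g k‖) ≤
          C0 * ((jb (n-k) ^ a1 * ‖f (n-k)‖) * (jb k ^ b1 * ‖g k‖)
              + (jb (n-k) ^ a2 * ‖f (n-k)‖) * (jb k ^ b2 * ‖g k‖)) := by
        have := mul_le_mul_of_nonneg_right (hK n k)
          (mul_nonneg (norm_nonneg (f (n-k))) (norm_nonneg (g k)))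
        calc |jb n ^ s - jb k ^ s| * |(k:ℝ)| * (‖f (n-k)‖ * ‖g k‖)
            ≤ C0 * (jb (n-k) ^ a1 * jb k ^ b1 + jb (n-k) ^ a2 * jb k ^ b2) *
              (‖f (n-k)‖ * ‖g k‖) := this
          _ = C0 * ((jb (n-k) ^ a1 * ‖f (n-k)‖) * (jb k ^ b1 * ‖g k‖)
              + (jb (n-k) ^ a2 * ‖f (n-k)‖) * (jb k ^ b2 * ‖g k‖)) := by ring
      calc ENNReal.ofReal (|jb n ^ s - jb k ^ s| * |(k:ℝ)| * (‖f (n-k)‖ * ‖g k‖))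
          ≤ ENNReal.ofReal (C0 * ((jb (n-k) ^ a1 * ‖f (n-k)‖) * (jb k ^ b1 * ‖g k‖)
              + (jb (n-k) ^ a2 * ‖f (n-k)‖) * (jb k ^ b2 * ‖g k‖))) :=
            ENNReal.ofReal_le_ofReal hle
        _ = c0 * (F1 (n-k) * G1 k + F2 (n-k) * G2 k) := by
            have nn1 : (0:ℝ) ≤ jb (n-k) ^ a1 * ‖f (n-k)‖ :=
              mul_nonneg (Real.rpow_nonneg (jb_pos _).le _) (norm_nonneg _)
            have nn2 : (0:ℝ) ≤ jb (n-k) ^ a2 * ‖f (n-k)‖ :=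
              mul_nonneg (Real.rpow_nonneg (jb_pos _).le _) (norm_nonneg _)
            have nn1' : (0:ℝ) ≤ jb k ^ b1 * ‖g k‖ :=
              mul_nonneg (Real.rpow_nonneg (jb_pos _).le _) (norm_nonneg _)
            have nn2' : (0:ℝ) ≤ jb k ^ b2 * ‖g k‖ :=
              mul_nonneg (Real.rpow_nonneg (jb_pos _).le _) (norm_nonneg _)
            rw [ENNReal.ofReal_mul hC0, ENNReal.ofReal_add (mul_nonneg nn1 nn1') (mul_nonneg nn2 nn2'),
              ENNReal.ofReal_mul nn1, ENNReal.ofReal_mul nn2]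
    calc ENNReal.ofReal ‖commCoeff s f g n‖
        ≤ ∑' k, ENNReal.ofReal ‖((jb n ^ s - jb k ^ s : ℝ) : ℂ) *
            (Complex.I * (k : ℂ)) * f (n - k) * g k‖ := h1
      _ ≤ ∑' k, c0 * (F1 (n-k) * G1 k + F2 (n-k) * G2 k) := ENNReal.tsum_le_tsum h2
      _ = c0 * ∑' k, (F1 (n-k) * G1 k + F2 (n-k) * G2 k) := ENNReal.tsum_mul_left
      _ = c0 * ((∑' k, F1 (n-k) * G1 k) + (∑' k, F2 (n-k) * G2 k)) := by
          rw [ENNReal.tsum_add]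
  -- square comparison helpers
  have sq_mono : ∀ x y : ℝ≥0∞, x ≤ y → x^2 ≤ y^2 := by
    intro x y h
    rw [sq, sq]
    exact mul_le_mul' h h
  have add_sq_le : ∀ x y : ℝ≥0∞, (x+y)^2 ≤ 3*(x^2+y^2) := by
    intro x y
    have h := ennreal_mul_le_sq_add_sq x y
    calc (x+y)^2 = x^2 + y^2 + (x*y + x*y) := by ring
      _ ≤ x^2 + y^2 + ((x^2+y^2) + (x^2+y^2)) := by
          exact add_le_add_right (add_le_add h h) _
      _ = 3*(x^2+y^2) := by ring
  -- Step C : Cauchy-Schwarz for the ℓ¹ sums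
  have CSgen : ∀ (a t : ℝ), 2*a + 1 + σ ≤ 2*t → ∀ h : ℤ → ℂ,
      (∑' m, ENNReal.ofReal (jb m ^ a * ‖h m‖))^2 ≤
        2 * Sσ * ∑' m, ENNReal.ofReal (jb m ^ (2*t) * ‖h m‖^2) := by
    intro a t hat h
    set p : ℤ → ℝ≥0∞ := fun m => ENNReal.ofReal (jb m ^ (-(1+σ)/2)) with hp
    set q : ℤ → ℝ≥0∞ := fun m => ENNReal.ofReal (jb m ^ (a+(1+σ)/2) * ‖h m‖) with hq
    have hsplit : ∀ m, ENNReal.ofReal (jb m ^ a * ‖h m‖) = p m * q m := by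
      intro m
      rw [hp, hq]
      rw [← ENNReal.ofReal_mul (Real.rpow_nonneg (jb_pos m).le _)]
      congr 1
      rw [← mul_assoc, ← Real.rpow_add (jb_pos m)]
      congr 2
      ring
    have hpsq : ∀ m, (p m)^2 = ENNReal.ofReal (jb m ^ (-(1+σ))) := by
      intro m
      rw [hp, ← ENNReal.ofReal_pow (Real.rpow_nonneg (jb_pos m).le _)]
      congr 1
      rw [← Real.rpow_natCast (jb m ^ (-(1+σ)/2)) 2, ← Real.rpow_mul (jb_pos m).le]
      congr 1
      push_cast
      ring
    have hqsq : ∀ m, (q m)^2 ≤ ENNReal.ofReal (jb m ^ (2*t) * ‖h m‖^2) := by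
      intro m
      have h1 : (q m)^2 = ENNReal.ofReal (jb m ^ (2*a+1+σ) * ‖h m‖^2) := by
        rw [hq, ← ENNReal.ofReal_pow (mul_nonneg (Real.rpow_nonneg (jb_pos m).le _) (norm_nonneg _))]
        congr 1
        rw [mul_pow]
        congr 1
        rw [← Real.rpow_natCast (jb m ^ (a+(1+σ)/2)) 2, ← Real.rpow_mul (jb_pos m).le]
        congr 1
        push_cast
        ring
      rw [h1]
      exact weight_mono hat _ m
    calc (∑' m, ENNReal.ofReal (jb m ^ a * ‖h m‖))^2
        = (∑' m, p m * q m)^2 := by rw [tsum_congr hsplit]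
      _ ≤ 2 * (∑' m, (p m)^2) * (∑' m, (q m)^2) := ennreal_cs p q
      _ ≤ 2 * Sσ * ∑' m, ENNReal.ofReal (jb m ^ (2*t) * ‖h m‖^2) := by
          apply mul_le_mul'
          · apply mul_le_mul_right
            rw [hSσ, tsum_congr hpsq]
          · exact ENNReal.tsum_le_tsum hqsq
  have SF1 : (∑' m, F1 m)^2 ≤ 2 * Sσ * Tf1 := CSgen a1 t1 ht1 f
  have SF2 : (∑' m, F2 m)^2 ≤ 2 * Sσ * Tf2 := CSgen a2 t2 ht2 f
  have SG1 : (∑' k, (G1 k)^2) ≤ Tg1 := by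
    apply ENNReal.tsum_le_tsum
    intro k
    have h1 : (G1 k)^2 = ENNReal.ofReal (jb k ^ (2*b1) * ‖g k‖^2) := by
      rw [hG1]
      rw [← ENNReal.ofReal_pow (mul_nonneg (Real.rpow_nonneg (jb_pos k).le _) (norm_nonneg _))]
      congr 1
      rw [mul_pow]
      congr 1
      rw [← Real.rpow_natCast (jb k ^ b1) 2, ← Real.rpow_mul (jb_pos k).le]
      congr 1
      push_cast
      ring
    rw [h1]
    exact weight_mono hu1 _ k
  have SG2 : (∑' k, (G2 k)^2) ≤ Tg2 := by
    apply ENNReal.tsum_le_tsum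
    intro k
    have h1 : (G2 k)^2 = ENNReal.ofReal (jb k ^ (2*b2) * ‖g k‖^2) := by
      rw [hG2]
      rw [← ENNReal.ofReal_pow (mul_nonneg (Real.rpow_nonneg (jb_pos k).le _) (norm_nonneg _))]
      congr 1
      rw [mul_pow]
      congr 1
      rw [← Real.rpow_natCast (jb k ^ b2) 2, ← Real.rpow_mul (jb_pos k).le]
      congr 1
      push_cast
      ring
    rw [h1]
    exact weight_mono hu2 _ k
  -- Step B : summing the squares
  set T : ℝ≥0∞ := ∑' n, ENNReal.ofReal (‖commCoeff s f g n‖^2) with hT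
  have stepB : T ≤ 12 * c0^2 * Sσ * (Tf1*Tg1 + Tf2*Tg2) := by
    have h1 : ∀ n : ℤ, ENNReal.ofReal (‖commCoeff s f g n‖^2) ≤
        3*c0^2 * ((∑' k, F1 (n-k) * G1 k)^2 + (∑' k, F2 (n-k) * G2 k)^2) := by
      intro n
      rw [ENNReal.ofReal_pow (norm_nonneg _)]
      calc (ENNReal.ofReal ‖commCoeff s f g n‖)^2
          ≤ (c0 * ((∑' k, F1 (n-k) * G1 k) + (∑' k, F2 (n-k) * G2 k)))^2 :=
            sq_mono _ _ (stepA n)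
        _ = c0^2 * ((∑' k, F1 (n-k) * G1 k) + (∑' k, F2 (n-k) * G2 k))^2 := mul_pow _ _ 2
        _ ≤ c0^2 * (3 * ((∑' k, F1 (n-k) * G1 k)^2 + (∑' k, F2 (n-k) * G2 k)^2)) :=
            mul_le_mul_right (add_sq_le _ _) _
        _ = 3*c0^2 * ((∑' k, F1 (n-k) * G1 k)^2 + (∑' k, F2 (n-k) * G2 k)^2) := by ring
    calc T ≤ ∑' n, 3*c0^2 * ((∑' k, F1 (n-k) * G1 k)^2 + (∑' k, F2 (n-k) * G2 k)^2) :=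
          ENNReal.tsum_le_tsum h1
      _ = 3*c0^2 * ((∑' n, (∑' k, F1 (n-k) * G1 k)^2) + ∑' n, (∑' k, F2 (n-k) * G2 k)^2) := by
          rw [ENNReal.tsum_mul_left, ENNReal.tsum_add]
      _ ≤ 3*c0^2 * ((2 * (∑' k, F1 k)^2 * (∑' k, (G1 k)^2))
            + (2 * (∑' k, F2 k)^2 * (∑' k, (G2 k)^2))) := by
          apply mul_le_mul_right
          exact add_le_add (ennreal_young F1 G1) (ennreal_young F2 G2)
      _ ≤ 3*c0^2 * ((2 * (2 * Sσ * Tf1) * Tg1) + (2 * (2 * Sσ * Tf2) * Tg2)) := by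
          apply mul_le_mul_right
          apply add_le_add
          · exact mul_le_mul' (mul_le_mul_right SF1 2) SG1
          · exact mul_le_mul' (mul_le_mul_right SF2 2) SG2
      _ = 12 * c0^2 * Sσ * (Tf1*Tg1 + Tf2*Tg2) := by ring
  -- finiteness of the right-hand side
  have hRHSfin : (12 : ℝ≥0∞) * c0^2 * Sσ * (Tf1*Tg1 + Tf2*Tg2) ≠ ⊤ := by
    apply ENNReal.mul_ne_top
    apply ENNReal.mul_ne_top
    apply ENNReal.mul_ne_top
    · exact ENNReal.ofNat_ne_top
    · exact ENNReal.pow_ne_top ENNReal.ofReal_ne_top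
    · exact hSσfin
    · exact ENNReal.add_ne_top.2
        ⟨ENNReal.mul_ne_top hTf1fin hTg1fin, ENNReal.mul_ne_top hTf2fin hTg2fin⟩
  have hTfin : T ≠ ⊤ := ne_top_of_le_ne_top hRHSfin stepB
  -- summability
  have hsummable : Summable (fun n : ℤ => ‖commCoeff s f g n‖^2) :=
    summable_of_ennreal_ne_top (fun n => sq_nonneg _) hTfin
  refine ⟨hsummable, ?_⟩
  -- the real-valued estimate
  have hTtoReal : T.toReal = ∑' n, ‖commCoeff s f g n‖^2 := by
    rw [hT, ← ENNReal.ofReal_tsum_of_nonneg (fun n => sq_nonneg _) hsummable]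
    exact ENNReal.toReal_ofReal (tsum_nonneg fun n => sq_nonneg _)
  set x1 : ℝ := ∑' m : ℤ, jb m ^ (2*t1) * ‖f m‖^2 with hx1
  set x2 : ℝ := ∑' m : ℤ, jb m ^ (2*t2) * ‖f m‖^2 with hx2
  set y1 : ℝ := ∑' m : ℤ, jb m ^ (2*u1) * ‖g m‖^2 with hy1
  set y2 : ℝ := ∑' m : ℤ, jb m ^ (2*u2) * ‖g m‖^2 with hy2
  set sr : ℝ := ∑' m : ℤ, jb m ^ (-(1+σ)) with hsr
  have hx1nn : 0 ≤ x1 := tsum_nonneg fun m =>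
    mul_nonneg (Real.rpow_nonneg (jb_pos m).le _) (sq_nonneg _)
  have hx2nn : 0 ≤ x2 := tsum_nonneg fun m =>
    mul_nonneg (Real.rpow_nonneg (jb_pos m).le _) (sq_nonneg _)
  have hy1nn : 0 ≤ y1 := tsum_nonneg fun m =>
    mul_nonneg (Real.rpow_nonneg (jb_pos m).le _) (sq_nonneg _)
  have hy2nn : 0 ≤ y2 := tsum_nonneg fun m =>
    mul_nonneg (Real.rpow_nonneg (jb_pos m).le _) (sq_nonneg _)
  have hsrnn : 0 ≤ sr := tsum_nonneg fun m => Real.rpow_nonneg (jb_pos m).le _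
  have hTf1eq : Tf1 = ENNReal.ofReal x1 := by
    rw [hTf1, ← ENNReal.ofReal_tsum_of_nonneg
      (fun m => mul_nonneg (Real.rpow_nonneg (jb_pos m).le _) (sq_nonneg _)) hf1]
  have hTf2eq : Tf2 = ENNReal.ofReal x2 := by
    rw [hTf2, ← ENNReal.ofReal_tsum_of_nonneg
      (fun m => mul_nonneg (Real.rpow_nonneg (jb_pos m).le _) (sq_nonneg _)) hf2]
  have hTg1eq : Tg1 = ENNReal.ofReal y1 := by
    rw [hTg1, ← ENNReal.ofReal_tsum_of_nonneg
      (fun m => mul_nonneg (Real.rpow_nonneg (jb_pos m).le _) (sq_nonneg _)) hg1]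
  have hTg2eq : Tg2 = ENNReal.ofReal y2 := by
    rw [hTg2, ← ENNReal.ofReal_tsum_of_nonneg
      (fun m => mul_nonneg (Real.rpow_nonneg (jb_pos m).le _) (sq_nonneg _)) hg2]
  have hSσeq : Sσ = ENNReal.ofReal sr := by
    rw [hSσ, ← ENNReal.ofReal_tsum_of_nonneg (fun m => Real.rpow_nonneg (jb_pos m).le _) hsig]
  have hRHStoReal : ((12 : ℝ≥0∞) * c0^2 * Sσ * (Tf1*Tg1 + Tf2*Tg2)).toReal
      = 12 * C0^2 * sr * (x1*y1 + x2*y2) := by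
    rw [hSσeq, hTf1eq, hTf2eq, hTg1eq, hTg2eq, hc0]
    rw [ENNReal.toReal_mul, ENNReal.toReal_mul, ENNReal.toReal_mul,
      ENNReal.toReal_add (ENNReal.mul_ne_top ENNReal.ofReal_ne_top ENNReal.ofReal_ne_top)
        (ENNReal.mul_ne_top ENNReal.ofReal_ne_top ENNReal.ofReal_ne_top),
      ENNReal.toReal_mul, ENNReal.toReal_mul, ENNReal.toReal_pow]
    simp [ENNReal.toReal_ofReal hC0, ENNReal.toReal_ofReal hx1nn, ENNReal.toReal_ofReal hx2nn,
      ENNReal.toReal_ofReal hy1nn, ENNReal.toReal_ofReal hy2nn, ENNReal.toReal_ofReal hsrnn]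
  have hmain : (∑' n, ‖commCoeff s f g n‖^2) ≤ 12 * C0^2 * sr * (x1*y1 + x2*y2) := by
    rw [← hTtoReal, ← hRHStoReal]
    exact ENNReal.toReal_mono hRHSfin stepB
  have h0 : hsNorm 0 (commCoeff s f g) = Real.sqrt (∑' n, ‖commCoeff s f g n‖^2) := by
    unfold hsNorm
    congr 1
    apply tsum_congr
    intro k
    rw [mul_zero, Real.rpow_zero, one_mul]
  rw [h0]
  have hN1 : hsNorm t1 f = Real.sqrt x1 := rfl
  have hN2 : hsNorm t2 f = Real.sqrt x2 := rfl
  have hM1 : hsNorm u1 g = Real.sqrt y1 := rfl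
  have hM2 : hsNorm u2 g = Real.sqrt y2 := rfl
  calc Real.sqrt (∑' n, ‖commCoeff s f g n‖^2)
      ≤ Real.sqrt (12 * C0^2 * sr * (x1*y1 + x2*y2)) := Real.sqrt_le_sqrt hmain
    _ = Real.sqrt (C0^2 * (12 * sr) * (x1*y1 + x2*y2)) := by ring_nf
    _ = Real.sqrt (C0^2) * Real.sqrt (12*sr) * Real.sqrt (x1*y1 + x2*y2) := by
        rw [Real.sqrt_mul (by positivity), Real.sqrt_mul (sq_nonneg C0)]
    _ = C0 * Real.sqrt (12*sr) * Real.sqrt (x1*y1 + x2*y2) := by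
        rw [Real.sqrt_sq hC0]
    _ ≤ C0 * Real.sqrt (12*sr) * (Real.sqrt (x1*y1) + Real.sqrt (x2*y2)) := by
        apply mul_le_mul_of_nonneg_left
          (sqrt_add_le_sqrt_add_sqrt (mul_nonneg hx1nn hy1nn) (mul_nonneg hx2nn hy2nn))
        positivity
    _ = (C0 * Real.sqrt (12 * sr)) *
          (hsNorm t1 f * hsNorm u1 g + hsNorm t2 f * hsNorm u2 g) := by
        rw [hN1, hN2, hM1, hM2, ← Real.sqrt_mul hx1nn, ← Real.sqrt_mul hx2nn]

lemma kernel_bound {s β : ℝ} (hs : 0 ≤ s) (hβ0 : 0 ≤ β) (hβ1 : β ≤ 1) (n k : ℤ) :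
    |jb n ^ s - jb k ^ s| * |(k:ℝ)| ≤ (s * 2 ^ (s+2) + 2 * (3 ^ s + 2 ^ s)) *
      (jb (n-k) ^ (1:ℝ) * jb k ^ s + jb (n-k) ^ (s + 1 - β) * jb k ^ β) := by
  have hT1 : (0:ℝ) ≤ jb (n-k) ^ (1:ℝ) * jb k ^ s :=
    mul_nonneg (Real.rpow_nonneg (jb_pos _).le _) (Real.rpow_nonneg (jb_pos _).le _)
  have hT2 : (0:ℝ) ≤ jb (n-k) ^ (s+1-β) * jb k ^ β :=
    mul_nonneg (Real.rpow_nonneg (jb_pos _).le _) (Real.rpow_nonneg (jb_pos _).le _)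
  have hc1 : (0:ℝ) ≤ s * 2 ^ (s+2) :=
    mul_nonneg hs (Real.rpow_nonneg (by norm_num) _)
  have hc2 : (0:ℝ) ≤ 2 * (3 ^ s + 2 ^ s) := by
    have := Real.rpow_nonneg (show (0:ℝ) ≤ 3 by norm_num) s
    have := Real.rpow_nonneg (show (0:ℝ) ≤ 2 by norm_num) s
    linarith
  rcases lt_or_ge (2 * |(n:ℝ) - k|) (|(k:ℝ)|) with h | h
  · have h1 := kernel_case1 hs h
    rw [Real.rpow_one]
    rw [Real.rpow_one] at hT1
    nlinarith [mul_nonneg hc2 hT1, mul_nonneg hc1 hT2, mul_nonneg hc2 hT2]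
  · have h1 := kernel_case2 hs hβ0 hβ1 h
    nlinarith [mul_nonneg hc1 hT1, mul_nonneg hc2 hT1, mul_nonneg hc1 hT2]

lemma summable_weight_mono {c d : ℝ} (hcd : c ≤ d) (h : ℤ → ℂ)
    (hsum : Summable (fun m : ℤ => jb m ^ (2*d) * ‖h m‖^2)) :
    Summable (fun m : ℤ => jb m ^ (2*c) * ‖h m‖^2) :=
  hsum.of_nonneg_of_le
    (fun m => mul_nonneg (Real.rpow_nonneg (jb_pos m).le _) (sq_nonneg _))
    (fun m => mul_le_mul_of_nonneg_right
      (Real.rpow_le_rpow_of_exponent_le (one_le_jb m) (by linarith)) (sq_nonneg _))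

/-- Commutator estimate:
‖⟨∂x⟩^s(f ∂x g) − f ⟨∂x⟩^s ∂x g‖_{L²}
  ≤ C (‖f‖_{H^{3/2+ε}} ‖g‖_{H^s} + ‖f‖_{H^{s+1}} ‖g‖_{H^{1/2+ε}}). -/
theorem stmt_3 (s ε : ℝ) (hs : 0 ≤ s) (hε : 0 < ε) :
    ∃ C > 0, ∀ f g : ℤ → ℂ,
      Summable (fun k : ℤ => jb k ^ (2 * max (s + 1) (3 / 2 + ε)) * ‖f k‖ ^ 2) →
      Summable (fun k : ℤ => jb k ^ (2 * (s + 1)) * ‖g k‖ ^ 2) →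
      Summable (fun n : ℤ => ‖commCoeff s f g n‖ ^ 2) ∧
      hsNorm 0 (commCoeff s f g)
        ≤ C * (hsNorm (3 / 2 + ε) f * hsNorm s g
              + hsNorm (s + 1) f * hsNorm (1 / 2 + ε) g) := by
  set σ : ℝ := min ε (1/2) with hσdef
  have hσ0 : 0 < σ := lt_min hε (by norm_num)
  have hσε : σ ≤ ε := min_le_left _ _
  have hσ1 : σ ≤ 1/2 := min_le_right _ _
  set C0 : ℝ := s * 2 ^ (s+2) + 2 * (3 ^ s + 2 ^ s) with hC0def
  have h3s : (1:ℝ) ≤ 3 ^ s := Real.one_le_rpow (by norm_num) hs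
  have h2s : (1:ℝ) ≤ 2 ^ s := Real.one_le_rpow (by norm_num) hs
  have hC0pos : 0 < C0 := by
    have : (0:ℝ) ≤ s * 2 ^ (s+2) := mul_nonneg hs (Real.rpow_nonneg (by norm_num) _)
    rw [hC0def]; nlinarith
  have hsig := sigma_summable hσ0
  set sr : ℝ := ∑' m : ℤ, jb m ^ (-(1+σ)) with hsrdef
  have hsrpos : 0 < sr := by
    rw [hsrdef]
    apply Summable.tsum_pos hsig (fun m => Real.rpow_nonneg (jb_pos m).le _) 0
    exact Real.rpow_pos_of_pos (jb_pos 0) _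
  set Cc : ℝ := C0 * Real.sqrt (12 * sr) with hCcdef
  have hCcpos : 0 < Cc := by
    rw [hCcdef]
    apply mul_pos hC0pos
    apply Real.sqrt_pos.2
    linarith
  refine ⟨2 * Cc, by linarith, ?_⟩
  intro f g hf hg
  -- summability transfers for f
  have hfmax1 : Summable (fun m : ℤ => jb m ^ (2*(3/2+ε)) * ‖f m‖^2) :=
    summable_weight_mono (le_max_right _ _) f hf
  have hfmax2 : Summable (fun m : ℤ => jb m ^ (2*(s+1)) * ‖f m‖^2) :=
    summable_weight_mono (le_max_left _ _) f hf
  have hgs : Summable (fun m : ℤ => jb m ^ (2*s) * ‖g m‖^2) :=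
    summable_weight_mono (by linarith) g hg
  have hgs1 : Summable (fun m : ℤ => jb m ^ (2*(s+1)) * ‖g m‖^2) :=
    summable_weight_mono le_rfl g hg
  have hYnn : 0 ≤ hsNorm (s+1) f * hsNorm (1/2+ε) g :=
    mul_nonneg (Real.sqrt_nonneg _) (Real.sqrt_nonneg _)
  have hXnn : 0 ≤ hsNorm (3/2+ε) f * hsNorm s g :=
    mul_nonneg (Real.sqrt_nonneg _) (Real.sqrt_nonneg _)
  rcases le_or_gt ε (s + 1/2) with hreg | hreg
  · -- regime 1 : 1/2 + ε ≤ s + 1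
    have hgε : Summable (fun m : ℤ => jb m ^ (2*(1/2+ε)) * ‖g m‖^2) :=
      summable_weight_mono (by linarith) g hg
    obtain ⟨hsummable, hest⟩ := core s σ 1 s (s + 1 - (1/2+σ/2)) (1/2+σ/2)
      (3/2+ε) s (s+1) (1/2+ε) C0 hσ0 hC0pos.le
      (by linarith) (by linarith) le_rfl (by linarith)
      f g hfmax1 hfmax2 hgs hgε
      (fun n k => kernel_bound hs (by linarith) (by linarith) n k)
    refine ⟨hsummable, le_trans hest ?_⟩
    rw [← hsrdef, ← hCcdef]
    have hsum : 0 ≤ hsNorm (3/2+ε) f * hsNorm s g + hsNorm (s+1) f * hsNorm (1/2+ε) g := by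
      linarith
    nlinarith [hCcpos, hsum]
  · rcases le_or_gt s 1 with hs1 | hs1
    · -- regime 2 : ε > s + 1/2, s ≤ 1, take β = s
      obtain ⟨hsummable, hest⟩ := core s σ 1 s (s + 1 - s) s
        (3/2+ε) s (3/2+ε) s C0 hσ0 hC0pos.le
        (by linarith) (by linarith) le_rfl le_rfl
        f g hfmax1 hfmax1 hgs hgs
        (fun n k => kernel_bound hs hs hs1 n k)
      refine ⟨hsummable, le_trans hest ?_⟩
      rw [← hsrdef, ← hCcdef]
      nlinarith [hCcpos, hXnn, hYnn]
    · -- regime 3 : ε > s + 1/2, s > 1, take β = 1/2 + σ/2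
      obtain ⟨hsummable, hest⟩ := core s σ 1 s (s + 1 - (1/2+σ/2)) (1/2+σ/2)
        (3/2+ε) s (3/2+ε) s C0 hσ0 hC0pos.le
        (by linarith) (by linarith) le_rfl (by linarith)
        f g hfmax1 hfmax1 hgs hgs
        (fun n k => kernel_bound hs (by linarith) (by linarith) n k)
      refine ⟨hsummable, le_trans hest ?_⟩
      rw [← hsrdef, ← hCcdef]
      nlinarith [hCcpos, hXnn, hYnn]
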